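/- One step of ProxSkip satisfies the descent inequality: given x_t, h_t ∈ ℝ^d, let x̂ = x_t - γ(∇f(x_t) - h_t), and with probability p set x_{t+1} = prox_{(γ/p)ψ}(x̂ - (γ/p)h_t), else x_{t+1} = x̂; set h_{t+1} = h_t + (p/γ)(x_{t+1} - x̂). Then E[‖x_{t+1} - x⋆‖² + (γ²/p²)‖h_{t+1} - h⋆‖²] ≤ ‖w_t - w⋆‖² + (1 - p²)(γ²/p²)‖h_t - h⋆‖², where w_t = x_t - γ∇f(x_t), w⋆ = x⋆ - γ∇f(x⋆), h⋆ = ∇f(x⋆). -/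

import Mathlib

open RealInnerProductSpace
noncomputable section
abbrev Euc (d : ℕ) := EuclideanSpace ℝ (Fin d)

/-- `ψ` is proper, closed (lower semicontinuous) and convex, with values in `ℝ ∪ {+∞}`. -/
def ProperClosedConvex {d : ℕ} (ψ : Euc d → EReal) : Prop :=
  (∃ x, ψ x ≠ ⊤) ∧ (∀ x, ψ x ≠ ⊥) ∧ LowerSemicontinuous ψ ∧
    ∀ x y : Euc d, ∀ a b : ℝ, 0 ≤ a → 0 ≤ b → a + b = 1 →
      ψ (a • x + b • y) ≤ (a : EReal) * ψ x + (b : EReal) * ψ y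

/-- `q = prox_{αψ}(x)`, i.e. `q` minimizes `y ↦ ½‖y - x‖² + α ψ(y)`. -/
def IsProxPt {d : ℕ} (ψ : Euc d → EReal) (α : ℝ) (x q : Euc d) : Prop :=
  ∀ y : Euc d, (((1:ℝ)/2 * ‖q - x‖^2 : ℝ) : EReal) + (α : EReal) * ψ q ≤
    (((1:ℝ)/2 * ‖y - x‖^2 : ℝ) : EReal) + (α : EReal) * ψ y

lemma ereal_comb (r a c : ℝ) : (r:EReal) + (a:EReal)*(c:EReal) = ((r + a*c : ℝ):EReal) := by
  norm_cast

/-- ψ is finite at a prox point. -/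
lemma prox_ne_top {d : ℕ} {ψ : Euc d → EReal} {α : ℝ} (hα : 0 < α)
    (hψ : ProperClosedConvex ψ) {x q : Euc d} (hq : IsProxPt ψ α x q) :
    ψ q ≠ ⊤ := by
  obtain ⟨⟨x0, hx0⟩, hbot, -, -⟩ := hψ
  intro htop
  have h := hq x0
  rw [htop, EReal.mul_top_of_pos (by exact_mod_cast hα),
    (EReal.coe_toReal hx0 (hbot x0)).symm, ereal_comb,
    EReal.add_top_of_ne_bot (EReal.coe_ne_bot _)] at h
  exact (EReal.coe_lt_top _).not_ge h

/-- The real form of the prox inequality, when both ψ values are finite. -/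
lemma prox_real {d : ℕ} {ψ : Euc d → EReal} {α : ℝ}
    (hbot : ∀ x, ψ x ≠ ⊥) {x q : Euc d} (hq : IsProxPt ψ α x q)
    (hq' : ψ q ≠ ⊤) {y : Euc d} (hy : ψ y ≠ ⊤) :
    1/2 * ‖q - x‖^2 + α * (ψ q).toReal ≤ 1/2 * ‖y - x‖^2 + α * (ψ y).toReal := by
  have h := hq y
  rw [(EReal.coe_toReal hq' (hbot q)).symm, (EReal.coe_toReal hy (hbot y)).symm,
    ereal_comb, ereal_comb, EReal.coe_le_coe_iff] at h
  exact h

/-- Quadratic growth of the prox objective at the prox point. -/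
lemma prox_strong {d : ℕ} {ψ : Euc d → EReal} {α : ℝ} (hα : 0 < α)
    (hψ : ProperClosedConvex ψ) {x q : Euc d} (hq : IsProxPt ψ α x q)
    {y : Euc d} (hy : ψ y ≠ ⊤) :
    1/2 * ‖q - x‖^2 + α * (ψ q).toReal + 1/2 * ‖y - q‖^2
      ≤ 1/2 * ‖y - x‖^2 + α * (ψ y).toReal := by
  have hqt : ψ q ≠ ⊤ := prox_ne_top hα hψ hq
  obtain ⟨-, hbot, -, hconv⟩ := hψ
  set cq := (ψ q).toReal with hcq
  set cy := (ψ y).toReal with hcy'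
  have key : ∀ t : ℝ, 0 < t → t ≤ 1 →
      0 ≤ ⟪q - x, y - q⟫ + (t/2) * ‖y - q‖^2 + α * (cy - cq) := by
    intro t ht ht1
    set z := (1 - t) • q + t • y with hz
    have hψz : ψ z ≤ (((1-t)*cq + t*cy : ℝ):EReal) := by
      have h := hconv q y (1-t) t (by linarith) (by linarith) (by ring)
      rw [(EReal.coe_toReal hqt (hbot q)).symm, (EReal.coe_toReal hy (hbot y)).symm] at h
      calc ψ z ≤ _ := h
        _ = _ := by norm_cast
    have hzt : ψ z ≠ ⊤ := by
      intro h; rw [h] at hψz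
      exact (EReal.coe_lt_top _).not_ge hψz
    have hcz : (ψ z).toReal ≤ (1-t)*cq + t*cy := by
      rw [(EReal.coe_toReal hzt (hbot z)).symm, EReal.coe_le_coe_iff] at hψz
      exact hψz
    have hr := prox_real hbot hq hqt hzt
    have hvec : z - x = (q - x) + t • (y - q) := by
      rw [hz]; module
    have hnorm : ‖z - x‖^2 = ‖q-x‖^2 + 2*(t*⟪q - x, y - q⟫) + t^2*‖y-q‖^2 := by
      rw [hvec, norm_add_sq_real, real_inner_smul_right, norm_smul]
      rw [Real.norm_eq_abs, abs_of_pos ht]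
      ring
    have hE : 0 ≤ t * (⟪q - x, y - q⟫ + (t/2) * ‖y - q‖^2 + α * (cy - cq)) := by
      nlinarith [mul_le_mul_of_nonneg_left hcz (le_of_lt hα)]
    exact le_of_mul_le_mul_left (by simpa using hE) ht
  have hA : 0 ≤ ⟪q - x, y - q⟫ + α * (cy - cq) := by
    set A := ⟪q - x, y - q⟫ + α * (cy - cq) with hAdef
    set B := ‖y - q‖^2 / 2 with hBdef
    have hB : 0 ≤ B := by positivity
    by_contra hneg
    push_neg at hneg
    have h1 := key 1 one_pos le_rfl
    have hB' : 0 < B := by nlinarith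
    have ht0 : 0 < -A / (2*B) := div_pos (by linarith) (by positivity)
    have ht1 : -A / (2*B) ≤ 1 := by
      rw [div_le_one (by positivity)]; nlinarith
    have h2 := key (-A / (2*B)) ht0 ht1
    have hsq : ‖y - q‖^2 = 2*B := by rw [hBdef]; ring
    rw [hsq] at h2
    have heq : -A/(2*B)/2*(2*B) = -A/2 := by field_simp
    rw [heq] at h2
    rw [hAdef] at hneg
    linarith
  have hexp : ‖y - x‖^2 = ‖q-x‖^2 + 2*⟪q - x, y - q⟫ + ‖y-q‖^2 := by
    have : y - x = (q - x) + (y - q) := by abel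
    rw [this, norm_add_sq_real]
  nlinarith

/-- Firm nonexpansiveness ingredient: monotonicity with quadratic term. -/
lemma prox_firm {d : ℕ} {ψ : Euc d → EReal} {α : ℝ} (hα : 0 < α)
    (hψ : ProperClosedConvex ψ) {a b qa qb : Euc d}
    (ha : IsProxPt ψ α a qa) (hb : IsProxPt ψ α b qb) :
    ‖qa - qb‖^2 ≤ ⟪a - b, qa - qb⟫ := by
  have hat := prox_ne_top hα hψ ha
  have hbt := prox_ne_top hα hψ hb
  have h1 := prox_strong hα hψ ha hbt
  have h2 := prox_strong hα hψ hb hat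
  have e1 : ‖qb - a‖^2 = ‖qa - a‖^2 - 2*⟪qa - a, qa - qb⟫ + ‖qa - qb‖^2 := by
    have : qb - a = (qa - a) - (qa - qb) := by abel
    rw [this, norm_sub_sq_real]
  have e2 : ‖qa - b‖^2 = ‖qb - b‖^2 + 2*⟪qb - b, qa - qb⟫ + ‖qa - qb‖^2 := by
    have : qa - b = (qb - b) + (qa - qb) := by abel
    rw [this, norm_add_sq_real]
  have e3 : ⟪qa - a, qa - qb⟫ - ⟪qb - b, qa - qb⟫ = ‖qa - qb‖^2 - ⟪a - b, qa - qb⟫ := by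
    rw [← inner_sub_left]
    have : (qa - a) - (qb - b) = (qa - qb) - (a - b) := by abel
    rw [this, inner_sub_left, real_inner_self_eq_norm_sq]
  have hyq : ‖qb - qa‖^2 = ‖qa - qb‖^2 := by
    rw [← norm_neg]; congr 1; abel
  nlinarith [h1, h2]

/-- The minimizer is a fixed point of the prox step. -/
lemma xstar_prox {d : ℕ} {f : Euc d → ℝ} {f' : Euc d → Euc d}
    {ψ : Euc d → EReal} (hψ : ProperClosedConvex ψ)
    {xstar : Euc d} (hgrad : HasGradientAt f (f' xstar) xstar)
    (hmin : ∀ y, ((f xstar : ℝ) : EReal) + ψ xstar ≤ ((f y : ℝ) : EReal) + ψ y)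
    {α : ℝ} (hα : 0 < α) :
    IsProxPt ψ α (xstar - α • f' xstar) xstar := by
  obtain ⟨⟨x0, hx0⟩, hbot, -, hconv⟩ := hψ
  have hst : ψ xstar ≠ ⊤ := by
    intro h
    have h2 := hmin x0
    rw [h, EReal.add_top_of_ne_bot (EReal.coe_ne_bot _),
      (EReal.coe_toReal hx0 (hbot x0)).symm, ← EReal.coe_add] at h2
    exact (EReal.coe_lt_top _).not_ge h2
  set cs := (ψ xstar).toReal with hcs
  intro y
  by_cases hy : ψ y = ⊤
  · rw [hy, EReal.mul_top_of_pos (by exact_mod_cast hα),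
      EReal.add_top_of_ne_bot (EReal.coe_ne_bot _)]
    exact le_top
  set cy := (ψ y).toReal with hcy
  set v := y - xstar with hv
  have hsub : cs - cy ≤ ⟪f' xstar, v⟫ := by
    have hkey : ∀ t : ℝ, 0 < t → t ≤ 1 →
        cs - cy ≤ (f (xstar + t • v) - f xstar) / t := by
      intro t ht ht1
      have hz : xstar + t • v = (1 - t) • xstar + t • y := by rw [hv]; module
      have hc := hconv xstar y (1-t) t (by linarith) (by linarith) (by ring)
      have hchain : ((f xstar : ℝ):EReal) + ψ xstar ≤
          ((f ((1-t) • xstar + t • y) : ℝ):EReal) + (((1-t)*cs + t*cy : ℝ):EReal) := by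
        refine (hmin ((1-t) • xstar + t • y)).trans (add_le_add le_rfl ?_)
        calc ψ _ ≤ _ := hc
          _ = _ := by
            rw [(EReal.coe_toReal hst (hbot _)).symm, (EReal.coe_toReal hy (hbot _)).symm]
            norm_cast
      rw [(EReal.coe_toReal hst (hbot _)).symm, ← EReal.coe_add, ← EReal.coe_add,
        EReal.coe_le_coe_iff] at hchain
      rw [hz, le_div_iff₀ ht]
      nlinarith [hchain]
    have hderiv : HasDerivAt (fun t : ℝ => f (xstar + t • v)) ⟪f' xstar, v⟫ 0 := by
      have hline : HasDerivAt (fun t : ℝ => xstar + t • v) v 0 := by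
        simpa using ((hasDerivAt_id (0:ℝ)).smul_const v).const_add xstar
      have h0 : xstar = xstar + (0:ℝ) • v := by simp
      have hFD : HasFDerivAt f ((InnerProductSpace.toDual ℝ _) (f' xstar))
          ((fun t : ℝ => xstar + t • v) 0) := by
        simpa using hgrad.hasFDerivAt
      have := hFD.comp_hasDerivAt (0:ℝ) hline
      simpa [Function.comp_def, InnerProductSpace.toDual_apply_apply] using this
    have hslope := hasDerivAt_iff_tendsto_slope.mp hderiv
    have hslope' : Filter.Tendsto (slope (fun t : ℝ => f (xstar + t • v)) 0)
        (nhdsWithin 0 (Set.Ioi 0)) (nhds ⟪f' xstar, v⟫) :=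
      hslope.mono_left (nhdsWithin_mono 0 (fun t ht => ne_of_gt ht))
    refine ge_of_tendsto hslope' ?_
    filter_upwards [Ioc_mem_nhdsGT_of_mem (Set.mem_Ico.mpr ⟨le_rfl, one_pos⟩)] with t ht
    have := hkey t ht.1 ht.2
    rw [slope_def_field]
    simp only [zero_smul, add_zero, sub_zero]
    exact this
  rw [(EReal.coe_toReal hst (hbot _)).symm, (EReal.coe_toReal hy (hbot _)).symm,
    ereal_comb, ereal_comb, EReal.coe_le_coe_iff]
  have e1 : xstar - (xstar - α • f' xstar) = α • f' xstar := by module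
  have e2 : y - (xstar - α • f' xstar) = v + α • f' xstar := by rw [hv]; module
  rw [e1, e2, norm_add_sq_real, real_inner_smul_right, norm_smul,
    Real.norm_eq_abs, abs_of_pos hα]
  have hcomm : ⟪v, f' xstar⟫ = ⟪f' xstar, v⟫ := real_inner_comm _ _
  nlinarith [mul_le_mul_of_nonneg_left hsub hα.le, sq_nonneg ‖v‖]

/-- One-step descent inequality for ProxSkip (Lemma 2 in the paper).  The expectation
over the Bernoulli(p) coin is written out explicitly as a convex combination of the
two branches (prox applied / prox skipped). -/
theorem proxskip_one_step {d : ℕ} (f : Euc d → ℝ) (f' : Euc d → Euc d)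
    (ψ : Euc d → EReal) (L μ γ p : ℝ) (hL : 0 < L) (hμ : 0 < μ)
    (hgrad : ∀ x, HasGradientAt f (f' x) x)
    (hsmooth : ∀ x y, ‖f' x - f' y‖ ≤ L * ‖x - y‖)
    (hsc : ConvexOn ℝ Set.univ fun x => f x - μ / 2 * ‖x‖ ^ 2)
    (hψ : ProperClosedConvex ψ)
    (hγ : 0 < γ) (hp : 0 < p) (hp1 : p ≤ 1)
    (xstar : Euc d)
    (hmin : ∀ y, ((f xstar : ℝ) : EReal) + ψ xstar ≤ ((f y : ℝ) : EReal) + ψ y)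
    (xt ht : Euc d)
    -- one step of the algorithm:
    (xhat xprox hprox' : Euc d)
    (hxhat : xhat = xt - γ • (f' xt - ht))
    (hxprox : IsProxPt ψ (γ / p) (xhat - (γ / p) • ht) xprox)
    (hhprox : hprox' = ht + (p / γ) • (xprox - xhat)) :
    p * (‖xprox - xstar‖ ^ 2 + γ ^ 2 / p ^ 2 * ‖hprox' - f' xstar‖ ^ 2)
      + (1 - p) * (‖xhat - xstar‖ ^ 2 + γ ^ 2 / p ^ 2 * ‖ht - f' xstar‖ ^ 2)
    ≤ ‖(xt - γ • f' xt) - (xstar - γ • f' xstar)‖ ^ 2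
      + (1 - p ^ 2) * (γ ^ 2 / p ^ 2) * ‖ht - f' xstar‖ ^ 2 := by
  set hstar := f' xstar with hsdef
  set α := γ / p with hαdef
  have hα : 0 < α := div_pos hγ hp
  set a := xhat - α • ht with hadef
  set b := xstar - α • hstar with hbdef
  have hbprox : IsProxPt ψ α b xstar := xstar_prox hψ (hgrad xstar) hmin hα
  have hfirm : ‖xprox - xstar‖^2 ≤ ⟪a - b, xprox - xstar⟫ := prox_firm hα hψ hxprox hbprox
  set u := (xt - γ • f' xt) - (xstar - γ • hstar) with hu
  set v := ht - hstar with hvdef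
  have hid : hprox' - hstar = (p/γ) • ((xprox - xstar) - (a - b)) := by
    rw [hhprox, hadef, hbdef, hαdef]
    match_scalars <;> (field_simp; try ring)
  have hn1 : γ^2/p^2 * ‖hprox' - hstar‖^2 = ‖(xprox - xstar) - (a - b)‖^2 := by
    rw [hid, norm_smul, Real.norm_eq_abs, abs_of_pos (div_pos hp hγ), mul_pow]
    field_simp
  have hprox_bound : ‖xprox - xstar‖^2 + γ^2/p^2 * ‖hprox' - hstar‖^2 ≤ ‖a - b‖^2 := by
    have hexp : ‖(xprox - xstar) - (a - b)‖^2
        = ‖xprox - xstar‖^2 - 2*⟪xprox - xstar, a - b⟫ + ‖a - b‖^2 :=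
      norm_sub_sq_real (xprox - xstar) (a - b)
    have hcomm : ⟪xprox - xstar, a - b⟫ = ⟪a - b, xprox - xstar⟫ := real_inner_comm _ _
    rw [hn1]
    linarith
  have hab : a - b = u + (γ - α) • v := by
    rw [hadef, hbdef, hxhat, hu, hvdef]; module
  have hhat : xhat - xstar = u + γ • v := by
    rw [hxhat, hu, hvdef]; module
  have e1 : ‖u + (γ - α) • v‖^2 = ‖u‖^2 + 2*((γ-α)*⟪u,v⟫) + (γ-α)^2*‖v‖^2 := by
    rw [norm_add_sq_real, real_inner_smul_right, norm_smul, Real.norm_eq_abs, mul_pow, sq_abs]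
  have e2 : ‖u + γ • v‖^2 = ‖u‖^2 + 2*(γ*⟪u,v⟫) + γ^2*‖v‖^2 := by
    rw [norm_add_sq_real, real_inner_smul_right, norm_smul, Real.norm_eq_abs, mul_pow, sq_abs]
  have hstep : p * (‖xprox - xstar‖^2 + γ^2/p^2 * ‖hprox' - hstar‖^2) ≤ p * ‖a - b‖^2 :=
    mul_le_mul_of_nonneg_left hprox_bound hp.le
  have hRHSeq : p * ‖a - b‖^2 + (1 - p) * (‖xhat - xstar‖^2 + γ^2/p^2 * ‖v‖^2)
      = ‖u‖^2 + (1 - p^2) * (γ^2/p^2) * ‖v‖^2 := by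
    rw [hab, hhat, e1, e2, hαdef]
    field_simp
    ring
  linarith
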